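/- Let U be an open star-shaped neighborhood of x in ℝ² that is not convex. Then there exist points y', z in U such that the segment [y', z] is not contained in U, and moreover x, y', z are not collinear. -/
import Mathlib

/-- Let `U` be an open star-shaped neighborhood of `x` in `ℝ²` that is
not convex. Then there exist points `y', z ∈ U` such that the segment `[y', z]` is not
contained in `U` and `x, y', z` are not collinear. -/
theorem flag_structures_stmt1 (U : Set (ℝ × ℝ)) (x : ℝ × ℝ)
    (hU : IsOpen U) (hx : x ∈ U)
    (hstar : ∀ u ∈ U, segment ℝ x u ⊆ U)
    (hnc : ¬ Convex ℝ U) :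
    ∃ y' ∈ U, ∃ z ∈ U,
      ¬ (segment ℝ y' z ⊆ U) ∧ ¬ Collinear ℝ ({x, y', z} : Set (ℝ × ℝ)) := by
  rw [convex_iff_segment_subset] at hnc
  push_neg at hnc
  obtain ⟨y, hy, z, hz, hseg⟩ := hnc
  refine ⟨y, hy, z, hz, hseg, ?_⟩
  intro hcol
  have h3 : Collinear ℝ ({y, x, z} : Set (ℝ × ℝ)) := by
    have : ({y, x, z} : Set (ℝ × ℝ)) ⊆ {x, y, z} := by
      intro p hp; simp at hp ⊢; tauto
    exact hcol.subset this
  rcases h3.wbtw_or_wbtw_or_wbtw with h | h | h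
  · -- Wbtw y x z : x between y and z
    apply hseg
    have hx_mem : x ∈ segment ℝ y z := h.mem_segment
    -- segment y z ⊆ [y,x] ∪ [x,z] ⊆ U
    have hyx : segment ℝ y x ⊆ U := by
      rw [segment_symm]; exact hstar y hy
    have hxz : segment ℝ x z ⊆ U := hstar z hz
    intro p hp
    rcases eq_or_ne p y with rfl | hpy
    · exact hy
    rcases eq_or_ne p z with rfl | hpz
    · exact hz
    have hpo : p ∈ openSegment ℝ y z := by
      rcases hp with ⟨a, b, ha, hb, hab, habp⟩
      rcases ha.eq_or_lt with rfl | ha'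
      · exfalso; apply hpz; rw [← habp]; simp at hab; simp [hab]
      rcases hb.eq_or_lt with rfl | hb'
      · exfalso; apply hpy; rw [← habp]; simp at hab; simp [hab]
      exact ⟨a, b, ha', hb', hab, habp⟩
    have hxr : x ∈ Set.range (AffineMap.lineMap y z : ℝ → ℝ × ℝ) := by
      rw [segment_eq_image_lineMap] at hx_mem
      obtain ⟨t, _, ht⟩ := hx_mem
      exact ⟨t, ht⟩
    have := openSegment_subset_union (𝕜 := ℝ) y z hxr hpo
    rcases this with rfl | hp' | hp'
    · exact hx
    · exact hyx (openSegment_subset_segment ℝ _ _ hp')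
    · exact hxz (openSegment_subset_segment ℝ _ _ hp')
  · -- Wbtw x z y : z between x and y
    apply hseg
    have hzm : z ∈ segment ℝ x y := h.mem_segment
    have : segment ℝ y z ⊆ segment ℝ x y :=
      (convex_segment x y).segment_subset (right_mem_segment ℝ x y) hzm
    exact this.trans (hstar y hy)
  · -- Wbtw z y x : y between z and x
    apply hseg
    have hym : y ∈ segment ℝ x z := by
      rw [wbtw_comm] at h; exact h.mem_segment
    have : segment ℝ y z ⊆ segment ℝ x z :=
      (convex_segment x z).segment_subset hym (right_mem_segment ℝ x z)
    exact this.trans (hstar z hz)
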